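/- Let X be a finite simple graph such that every cycle of X has length at least g (g ≥ 3), let n ≥ 1, and suppose the vertex set V(X) cannot be partitioned into n or fewer sets each of which induces a forest (an acyclic subgraph). Then |V(X)| ≥ C(n + ⌊g/2⌋ − 1, n−1) + 2·C(n + ⌊g/2⌋ − 1, n) − 1. -/

import Mathlib

set_option linter.unusedSectionVars false
set_option linter.unusedVariables false

open SimpleGraph Finset
open scoped Classical

namespace DSG

variable {V : Type*} [Fintype V]

/-- "No cycle of `X` lies entirely inside `A`". -/
def NC (X : SimpleGraph V) (A : Finset V) : Prop :=
  ∀ ⦃u : V⦄ (w : X.Walk u u), w.IsCycle → ∃ x ∈ w.support, x ∉ A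

lemma NC.mono {X : SimpleGraph V} {A B : Finset V} (h : A ⊆ B) (hB : NC X B) : NC X A := by
  intro u w hw
  obtain ⟨x, hx, hxB⟩ := hB w hw
  exact ⟨x, hx, fun hxA => hxB (h hxA)⟩

/-- The restriction of a graph to a finite vertex set (keeping all vertices). -/
def Rg (X : SimpleGraph V) (S : Finset V) : SimpleGraph V where
  Adj x y := X.Adj x y ∧ x ∈ S ∧ y ∈ S
  symm := ⟨fun x y ⟨h, hx, hy⟩ => ⟨h.symm, hy, hx⟩⟩
  loopless := ⟨fun x h => X.loopless.irrefl x h.1⟩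

lemma rg_le {X : SimpleGraph V} {S : Finset V} : Rg X S ≤ X := fun _ _ h => h.1

lemma rg_walk_mem {X : SimpleGraph V} {S : Finset V} :
    ∀ {a b : V}, (Rg X S).Walk a b → a ∈ S → b ∈ S
  | _, _, Walk.nil, h => h
  | _, _, Walk.cons hadj p, _ => rg_walk_mem p hadj.2.2

lemma rg_girth {X : SimpleGraph V} {S : Finset V} {k : ℕ}
    (hgir : ∀ ⦃u : V⦄ (w : X.Walk u u), w.IsCycle → 2 * k ≤ w.length) :
    ∀ ⦃u : V⦄ (w : (Rg X S).Walk u u), w.IsCycle → 2 * k ≤ w.length := by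
  intro u w hc
  have h := hgir (w.mapLe (rg_le)) (hc.mapLe _)
  rwa [Walk.mapLe, Walk.length_map] at h

lemma cycle_transfer {X : SimpleGraph V} {S : Finset V} {u : V} (w : X.Walk u u)
    (hc : w.IsCycle) (hsupp : ∀ x ∈ w.support, x ∈ S) :
    ∃ (w' : (Rg X S).Walk u u), w'.IsCycle ∧ ∀ x ∈ w'.support, x ∈ w.support := by
  have hed : ∀ e ∈ w.edges, e ∈ (Rg X S).edgeSet := by
    intro e
    refine Sym2.ind (fun a b he => ?_) e
    exact (SimpleGraph.mem_edgeSet _).2 ⟨w.adj_of_mem_edges he,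
      hsupp _ (w.fst_mem_support_of_mem_edges he), hsupp _ (w.snd_mem_support_of_mem_edges he)⟩
  refine ⟨w.transfer (Rg X S) hed, hc.transfer hed, ?_⟩
  intro x hx
  rwa [Walk.support_transfer] at hx

lemma dist_lt_of_mem_geo {G : SimpleGraph V} {v x y : V} (w : G.Walk v x)
    (hw : w.length = G.dist v x) (hy : y ∈ w.support) (hyx : y ≠ x) :
    G.dist v y < G.dist v x := by
  have hsplit := w.take_spec hy
  have hlen : (w.takeUntil y hy).length + (w.dropUntil y hy).length = w.length := by
    rw [← Walk.length_append, hsplit]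
  have h1 : G.dist v y ≤ (w.takeUntil y hy).length := SimpleGraph.dist_le (w.takeUntil y hy)
  have h2 : 1 ≤ (w.dropUntil y hy).length := by
    rcases Nat.eq_zero_or_pos (w.dropUntil y hy).length with h0 | h
    · exact absurd (Walk.eq_of_length_eq_zero h0) hyx
    · exact h
  omega

lemma dist_le_succ_of_adj {G : SimpleGraph V} {v x y : V} (h : G.Adj x y)
    (hr : G.Reachable v y) : G.dist v x ≤ G.dist v y + 1 := by
  obtain ⟨w, hw⟩ := hr.exists_walk_length_eq_dist
  have h2 := SimpleGraph.dist_le (w.concat h.symm)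
  rwa [Walk.length_concat, hw] at h2

lemma isPath_concat {G : SimpleGraph V} {u v z : V} {p : G.Walk u v} (hp : p.IsPath)
    (h : G.Adj v z) (hz : z ∉ p.support) : (p.concat h).IsPath := by
  rw [Walk.concat_eq_append]
  rw [Walk.isPath_def] at hp ⊢
  rw [Walk.support_append]
  simp only [Walk.support_cons, Walk.support_nil, List.tail_cons]
  rw [List.nodup_append]
  refine ⟨hp, List.nodup_singleton z, ?_⟩
  intro a ha b hb
  rw [List.mem_singleton] at hb
  subst hb
  exact fun h => hz (h ▸ ha)

section Girth

variable {G : SimpleGraph V} {k : ℕ} {v : V}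

/-- No edge between two vertices at the same level `i < k` of the BFS from `v`. -/
lemma no_equal_level
    (hgir : ∀ ⦃u : V⦄ (w : G.Walk u u), w.IsCycle → 2 * k ≤ w.length)
    {i : ℕ} {x₁ x₂ : V} (hadj : G.Adj x₁ x₂) (h₁ : G.Reachable v x₁)
    (h₂ : G.Reachable v x₂) (d₁ : G.dist v x₁ = i) (d₂ : G.dist v x₂ = i)
    (hik : i < k) : False := by
  obtain ⟨w₁, hw₁⟩ := h₁.exists_walk_length_eq_dist
  obtain ⟨w₂, hw₂⟩ := h₂.exists_walk_length_eq_dist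
  have hx₂w₁ : x₂ ∉ w₁.support := by
    intro hmem
    rcases eq_or_ne x₂ x₁ with heq | hne
    · exact hadj.ne' heq
    · have := dist_lt_of_mem_geo w₁ hw₁ hmem hne
      omega
  have hx₁w₂ : x₁ ∉ w₂.support := by
    intro hmem
    rcases eq_or_ne x₁ x₂ with heq | hne
    · exact hadj.ne heq
    · have := dist_lt_of_mem_geo w₂ hw₂ hmem hne
      omega
  set W := w₁.reverse.append w₂ with hW
  have hQ : W.bypass.IsPath := W.bypass_isPath
  have hedge : s(x₂, x₁) ∉ W.bypass.edges := by
    intro hmem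
    have hmem' := W.edges_bypass_subset hmem
    rw [hW, Walk.edges_append] at hmem'
    rcases List.mem_append.1 hmem' with h | h
    · rw [Walk.edges_reverse, List.mem_reverse] at h
      exact hx₂w₁ (w₁.fst_mem_support_of_mem_edges h)
    · exact hx₁w₂ (w₂.snd_mem_support_of_mem_edges h)
  have hcyc : (Walk.cons hadj.symm W.bypass).IsCycle :=
    (Walk.cons_isCycle_iff _ _).2 ⟨hQ, hedge⟩
  have hlen := hgir _ hcyc
  have hlc : (Walk.cons hadj.symm W.bypass).length = W.bypass.length + 1 :=
    Walk.length_cons _ _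
  have hWlen : W.length = i + i := by
    rw [hW, Walk.length_append, Walk.length_reverse, hw₁, hw₂, d₁, d₂]
  have hbl := W.length_bypass_le
  omega

/-- No vertex beyond level `i` has two distinct neighbours at level `i`, provided `i + 1 < k`. -/
lemma no_two_parents
    (hgir : ∀ ⦃u : V⦄ (w : G.Walk u u), w.IsCycle → 2 * k ≤ w.length)
    {i : ℕ} {y x₁ x₂ : V} (hne : x₁ ≠ x₂)
    (h₁ : G.Adj y x₁) (h₂ : G.Adj y x₂) (r₁ : G.Reachable v x₁) (r₂ : G.Reachable v x₂)
    (d₁ : G.dist v x₁ = i) (d₂ : G.dist v x₂ = i) (hy : i ≤ G.dist v y)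
    (hik : i + 1 < k) : False := by
  obtain ⟨w₁, hw₁⟩ := r₁.exists_walk_length_eq_dist
  obtain ⟨w₂, hw₂⟩ := r₂.exists_walk_length_eq_dist
  have hyw₁ : y ∉ w₁.support := by
    intro hmem
    rcases eq_or_ne y x₁ with heq | hne'
    · exact h₁.ne heq
    · have := dist_lt_of_mem_geo w₁ hw₁ hmem hne'
      omega
  have hyw₂ : y ∉ w₂.support := by
    intro hmem
    rcases eq_or_ne y x₂ with heq | hne'
    · exact h₂.ne heq
    · have := dist_lt_of_mem_geo w₂ hw₂ hmem hne'
      omega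
  set W := w₁.reverse.append w₂ with hW
  have hyW : y ∉ W.support := by
    rw [hW]
    intro hmem
    rcases (Walk.mem_support_append_iff _ _).1 hmem with h | h
    · rw [Walk.support_reverse, List.mem_reverse] at h
      exact hyw₁ h
    · exact hyw₂ h
  have hQpath := W.bypass_isPath
  have hyQ : y ∉ W.bypass.support := fun h => hyW (W.support_bypass_subset h)
  have hP2 : (W.bypass.concat h₂.symm).IsPath := isPath_concat hQpath h₂.symm hyQ
  have hedge : s(y, x₁) ∉ (W.bypass.concat h₂.symm).edges := by
    rw [Walk.edges_concat]
    intro hmem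
    rw [List.concat_eq_append] at hmem
    rcases List.mem_append.1 hmem with h | h
    · exact hyQ (W.bypass.fst_mem_support_of_mem_edges h)
    · rw [List.mem_singleton, Sym2.eq_iff] at h
      rcases h with ⟨h1, h2⟩ | ⟨h1, h2⟩
      · exact h₂.ne h1
      · exact hne h2
  have hcyc : (Walk.cons h₁ (W.bypass.concat h₂.symm)).IsCycle :=
    (Walk.cons_isCycle_iff _ _).2 ⟨hP2, hedge⟩
  have hlen := hgir _ hcyc
  have hlc : (Walk.cons h₁ (W.bypass.concat h₂.symm)).length
      = (W.bypass.concat h₂.symm).length + 1 := Walk.length_cons _ _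
  have hlcc : (W.bypass.concat h₂.symm).length = W.bypass.length + 1 :=
    Walk.length_concat _ _
  have hWlen : W.length = i + i := by
    rw [hW, Walk.length_append, Walk.length_reverse, hw₁, hw₂, d₁, d₂]
  have hbl := W.length_bypass_le
  omega

end Girth

lemma cycle_neighbors {G : SimpleGraph V} {u : V} {w : G.Walk u u} (hc : w.IsCycle) :
    ∃ a b : V, a ≠ b ∧ G.Adj u a ∧ G.Adj u b ∧ a ∈ w.support ∧ b ∈ w.support := by
  obtain ⟨b₀, hadj, p, rfl⟩ := Walk.not_nil_iff.1 hc.not_nil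
  have h3 := hc.three_le_length
  rw [Walk.length_cons] at h3
  obtain ⟨hp, hedge⟩ := (Walk.cons_isCycle_iff p hadj).1 hc
  have hq : p.reverse.IsPath := hp.reverse
  have hqnil : ¬ p.reverse.Nil := by
    rw [Walk.nil_iff_length_eq, Walk.length_reverse]
    omega
  obtain ⟨a, h₂, r, hrep⟩ := Walk.not_nil_iff.1 hqnil
  have hasup : a ∈ p.support := by
    have ha' : a ∈ p.reverse.support := by rw [hrep]; simp
    rwa [Walk.support_reverse, List.mem_reverse] at ha'
  have hane : a ≠ b₀ := by
    rintro rfl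
    have hq' := hq
    rw [hrep, Walk.cons_isPath_iff] at hq'
    have hrlen : 1 ≤ r.length := by
      have hl : p.reverse.length = r.length + 1 := by rw [hrep, Walk.length_cons]
      rw [Walk.length_reverse] at hl
      omega
    have hrnil : ¬ r.Nil := by rw [Walk.nil_iff_length_eq]; omega
    obtain ⟨c, h₃, r', hrep'⟩ := Walk.not_nil_iff.1 hrnil
    have hr' := hq'.1
    rw [hrep', Walk.cons_isPath_iff] at hr'
    exact hr'.2 (Walk.end_mem_support r')
  exact ⟨a, b₀, hane, h₂, hadj, by simp [hasup], by simp⟩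

lemma rotate_support_subset {G : SimpleGraph V} {u x : V} (w : G.Walk u u) (hx : x ∈ w.support) :
    ∀ y ∈ (w.rotate x hx).support, y ∈ w.support := by
  intro y hy
  rw [Walk.support_eq_cons] at hy
  rcases List.mem_cons.1 hy with rfl | hy'
  · exact hx
  · exact List.mem_of_mem_tail ((Walk.support_rotate w _ hx).mem_iff.1 hy')

lemma ball_acyclic {G : SimpleGraph V} {k : ℕ} {v : V}
    (hgir : ∀ ⦃u : V⦄ (w : G.Walk u u), w.IsCycle → 2 * k ≤ w.length)
    {u : V} (w : G.Walk u u) (hc : w.IsCycle)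
    (hball : ∀ x ∈ w.support, G.Reachable v x ∧ G.dist v x < k) : False := by
  obtain ⟨x₀, hx₀mem', hx₀max⟩ :=
    Finset.exists_max_image w.support.toFinset (fun x => G.dist v x) ⟨u, by simp⟩
  rw [List.mem_toFinset] at hx₀mem'
  have hc' := hc.rotate hx₀mem'
  have hsub := rotate_support_subset w hx₀mem'
  obtain ⟨a, b, hab, ha, hb, hasup, hbsup⟩ := cycle_neighbors hc'
  have haw := hsub a hasup
  have hbw := hsub b hbsup
  obtain ⟨hra, hda⟩ := hball a haw
  obtain ⟨hrb, hdb⟩ := hball b hbw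
  obtain ⟨hrx, hdx⟩ := hball x₀ hx₀mem'
  have hmaxa : G.dist v a ≤ G.dist v x₀ := hx₀max a (List.mem_toFinset.2 haw)
  have hmaxb : G.dist v b ≤ G.dist v x₀ := hx₀max b (List.mem_toFinset.2 hbw)
  have ha₀pos : 1 ≤ G.dist v x₀ := by
    by_contra hcon
    push_neg at hcon
    have hx0 : G.dist v x₀ = 0 := by omega
    have hda0 : G.dist v a = 0 := by omega
    have e1 : v = x₀ := hrx.dist_eq_zero_iff.1 hx0
    have e2 : v = a := hra.dist_eq_zero_iff.1 hda0
    exact ha.ne (e1.symm.trans e2)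
  have hda' : G.dist v a = G.dist v x₀ - 1 := by
    have hlow := dist_le_succ_of_adj ha hra
    rcases eq_or_ne (G.dist v a) (G.dist v x₀) with heq | hne
    · exact absurd (no_equal_level hgir ha hrx hra rfl heq hdx) not_false
    · omega
  have hdb' : G.dist v b = G.dist v x₀ - 1 := by
    have hlow := dist_le_succ_of_adj hb hrb
    rcases eq_or_ne (G.dist v b) (G.dist v x₀) with heq | hne
    · exact absurd (no_equal_level hgir hb hrx hrb rfl heq hdx) not_false
    · omega
  exact no_two_parents hgir hab ha hb hra hrb hda' hdb'
    (by omega) (by omega)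

/-- Moore-type lower bound on the ball of radius `k-1` in a graph with no cycle
shorter than `2k` and minimum degree `2n+2` on the reachable part. -/
lemma moore {G : SimpleGraph V} {k n : ℕ} (hk : 1 ≤ k) (v : V)
    (hgir : ∀ ⦃u : V⦄ (w : G.Walk u u), w.IsCycle → 2 * k ≤ w.length)
    (hdeg : ∀ x, G.Reachable v x → 2*n+2 ≤ (univ.filter (fun y => G.Adj x y)).card) :
    1 + (2*n+2) * ∑ i ∈ Finset.range (k-1), (2*n+1)^i
      ≤ (univ.filter (fun x => G.Reachable v x ∧ G.dist v x < k)).card := by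
  obtain ⟨m, rfl⟩ : ∃ m, k = m + 1 := ⟨k - 1, by omega⟩
  set Lvl : ℕ → Finset V :=
    fun i => univ.filter (fun x => G.Reachable v x ∧ G.dist v x = i) with hLvl
  have hv0 : v ∈ Lvl 0 := by
    rw [hLvl, Finset.mem_filter]
    exact ⟨Finset.mem_univ _, Reachable.refl v, SimpleGraph.dist_self⟩
  have hstep : ∀ j, 1 ≤ j → j + 1 ≤ m → (2*n+1) * (Lvl j).card ≤ (Lvl (j+1)).card := by
    intro j hj hjm
    set C : V → Finset V := fun x => (Lvl (j+1)).filter (fun y => G.Adj x y) with hC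
    have key1 : ∀ x ∈ Lvl j, 2*n+1 ≤ (C x).card := by
      intro x hx
      rw [hLvl, Finset.mem_filter] at hx
      obtain ⟨-, hrx, hdx⟩ := hx
      set Low := univ.filter (fun y => G.Adj x y ∧ G.dist v y < j) with hLowdef
      have hLow1 : Low.card ≤ 1 := by
        rw [Finset.card_le_one]
        intro y₁ hy₁ y₂ hy₂
        rw [hLowdef, Finset.mem_filter] at hy₁ hy₂
        obtain ⟨-, hadj₁, hlt₁⟩ := hy₁
        obtain ⟨-, hadj₂, hlt₂⟩ := hy₂
        have hr₁ : G.Reachable v y₁ := hrx.trans hadj₁.reachable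
        have hr₂ : G.Reachable v y₂ := hrx.trans hadj₂.reachable
        have hge₁ := dist_le_succ_of_adj hadj₁.symm hrx
        have hge₂ := dist_le_succ_of_adj hadj₂.symm hrx
        have hlow₁ := dist_le_succ_of_adj hadj₁ hr₁
        have hlow₂ := dist_le_succ_of_adj hadj₂ hr₂
        by_contra hne
        exact no_two_parents hgir hne hadj₁ hadj₂ hr₁ hr₂
          (show G.dist v y₁ = j - 1 by omega) (show G.dist v y₂ = j - 1 by omega)
          (by omega) (by omega)
      have hcover : univ.filter (fun y => G.Adj x y) ⊆ Low ∪ C x := by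
        intro y hy
        rw [Finset.mem_filter] at hy
        obtain ⟨-, hadj⟩ := hy
        have hry : G.Reachable v y := hrx.trans hadj.reachable
        have hub : G.dist v y ≤ j + 1 := by
          have := dist_le_succ_of_adj hadj.symm hrx
          omega
        have hnej : G.dist v y ≠ j := fun heq =>
          no_equal_level hgir hadj hrx hry hdx heq (by omega)
        rcases lt_or_ge (G.dist v y) j with hlt | hge
        · exact Finset.mem_union_left _ (by rw [hLowdef, Finset.mem_filter]; exact ⟨Finset.mem_univ _, hadj, hlt⟩)
        · refine Finset.mem_union_right _ ?_
          rw [hC, Finset.mem_filter, hLvl, Finset.mem_filter]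
          exact ⟨⟨Finset.mem_univ _, hry, by omega⟩, hadj⟩
      have hdegx := hdeg x hrx
      have hc1 := Finset.card_le_card hcover
      have hc2 := Finset.card_union_le Low (C x)
      omega
    have hdisj : ∀ x₁ ∈ Lvl j, ∀ x₂ ∈ Lvl j, x₁ ≠ x₂ → Disjoint (C x₁) (C x₂) := by
      intro x₁ hx₁ x₂ hx₂ hne
      rw [Finset.disjoint_left]
      intro y hy₁ hy₂
      rw [hC, Finset.mem_filter] at hy₁ hy₂
      obtain ⟨hyl, hadj₁⟩ := hy₁
      obtain ⟨-, hadj₂⟩ := hy₂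
      rw [hLvl, Finset.mem_filter] at hyl hx₁ hx₂
      exact no_two_parents hgir hne hadj₁.symm hadj₂.symm hx₁.2.1 hx₂.2.1
        hx₁.2.2 hx₂.2.2 (by omega) (by omega)
    calc (2*n+1) * (Lvl j).card = ∑ _x ∈ Lvl j, (2*n+1) := by
          rw [Finset.sum_const, smul_eq_mul, mul_comm]
      _ ≤ ∑ x ∈ Lvl j, (C x).card := Finset.sum_le_sum key1
      _ = ((Lvl j).biUnion C).card := (Finset.card_biUnion hdisj).symm
      _ ≤ (Lvl (j+1)).card := by
          apply Finset.card_le_card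
          intro y hy
          rw [Finset.mem_biUnion] at hy
          obtain ⟨x, -, hx⟩ := hy
          rw [hC, Finset.mem_filter] at hx
          exact hx.1
  have hpow : ∀ i, i < m → (2*n+2) * (2*n+1)^i ≤ (Lvl (i+1)).card := by
    intro i
    induction i with
    | zero =>
      intro h0
      have hsub : univ.filter (fun y => G.Adj v y) ⊆ Lvl 1 := by
        intro y hy
        rw [Finset.mem_filter] at hy
        obtain ⟨-, hadj⟩ := hy
        have hry : G.Reachable v y := hadj.reachable
        have hub : G.dist v y ≤ 1 := by
          have := dist_le_succ_of_adj hadj.symm (Reachable.refl v)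
          rw [SimpleGraph.dist_self] at this
          omega
        have hne0 : G.dist v y ≠ 0 := by
          intro h
          exact hadj.ne (hry.dist_eq_zero_iff.1 h)
        rw [hLvl, Finset.mem_filter]
        exact ⟨Finset.mem_univ _, hry, by omega⟩
      have hdv := hdeg v (Reachable.refl v)
      have := Finset.card_le_card hsub
      simp only [pow_zero, mul_one, Nat.zero_add]
      omega
    | succ i ihi =>
      intro h
      have h1 := ihi (by omega)
      have h2 := hstep (i+1) (by omega) (by omega)
      calc (2*n+2) * (2*n+1)^(i+1) = (2*n+1) * ((2*n+2) * (2*n+1)^i) := by ring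
        _ ≤ (2*n+1) * (Lvl (i+1)).card := Nat.mul_le_mul_left _ h1
        _ ≤ (Lvl (i+1+1)).card := h2
  have hdisjL : ∀ i ∈ Finset.range (m+1), ∀ j ∈ Finset.range (m+1), i ≠ j →
      Disjoint (Lvl i) (Lvl j) := by
    intro i _ j _ hne
    rw [Finset.disjoint_left]
    intro x hxi hxj
    rw [hLvl, Finset.mem_filter] at hxi hxj
    exact hne (hxi.2.2 ▸ hxj.2.2)
  have hunion : (Finset.range (m+1)).biUnion Lvl
      ⊆ univ.filter (fun x => G.Reachable v x ∧ G.dist v x < m + 1) := by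
    intro x hx
    rw [Finset.mem_biUnion] at hx
    obtain ⟨i, hi, hx⟩ := hx
    rw [Finset.mem_range] at hi
    rw [hLvl, Finset.mem_filter] at hx
    rw [Finset.mem_filter]
    exact ⟨Finset.mem_univ _, hx.2.1, by omega⟩
  have hge := Finset.card_le_card hunion
  rw [Finset.card_biUnion hdisjL] at hge
  have hsum : ∑ i ∈ Finset.range (m+1), (Lvl i).card
      = (∑ i ∈ Finset.range m, (Lvl (i+1)).card) + (Lvl 0).card :=
    Finset.sum_range_succ' _ _
  have hL0 : 1 ≤ (Lvl 0).card := Finset.card_pos.2 ⟨v, hv0⟩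
  have hsum2 : (2*n+2) * ∑ i ∈ Finset.range (m+1-1), (2*n+1)^i
      ≤ ∑ i ∈ Finset.range m, (Lvl (i+1)).card := by
    simp only [Nat.add_sub_cancel]
    rw [Finset.mul_sum]
    exact Finset.sum_le_sum (fun i hi => hpow i (Finset.mem_range.1 hi))
  omega

/-- Binomial/geometric estimate used in the induction. -/
lemma binom_le_geom (a' : ℕ) : ∀ m : ℕ,
    Nat.choose (a'+1+m) a' + 2 * Nat.choose (a'+1+m) (a'+1) ≤ (2*a'+4) * (2*a'+3)^m := by
  intro m
  induction m with
  | zero =>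
    rw [pow_zero, mul_one, Nat.add_zero, Nat.choose_succ_self_right, Nat.choose_self]
    omega
  | succ m ih =>
    rcases Nat.eq_zero_or_pos a' with rfl | ha'
    · simp only [Nat.zero_add, Nat.choose_one_right, Nat.choose_zero_right] at *
      have h1 : m + 1 < 3 ^ (m+1) := Nat.lt_pow_self (by norm_num)
      have h2 : (4:ℕ) * (m+2) ≤ 4 * 3^(m+1) := by
        apply Nat.mul_le_mul_left
        omega
      calc 1 + 2 * (1 + (m+1)) ≤ 4 * (m + 2) := by omega
        _ ≤ 4 * 3^(m+1) := h2
        _ = (2*0+4) * (2*0+3)^(m+1) := by norm_num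
    · obtain ⟨c, rfl⟩ : ∃ c, a' = c + 1 := ⟨a' - 1, by omega⟩
      have e1 : c+1+1+(m+1) = (c+1+1+m)+1 := by omega
      rw [e1]
      set N := c+1+1+m with hN
      rw [show (c+1 : ℕ) = c + 1 from rfl, Nat.choose_succ_succ' N c,
        Nat.choose_succ_succ' N (c+1)]
      have hkey : 2 * Nat.choose N c ≤ (c+1) * Nat.choose N (c+1) := by
        have h := Nat.choose_succ_right_eq N c
        have h2 : N - c = m + 2 := by omega
        rw [h2] at h
        calc 2 * Nat.choose N c ≤ (m+2) * Nat.choose N c := by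
              apply Nat.mul_le_mul_right
              omega
          _ = Nat.choose N c * (m+2) := by ring
          _ = Nat.choose N (c+1) * (c+1) := h.symm
          _ = (c+1) * Nat.choose N (c+1) := by ring
      have ih' := ih
      -- ih' : choose N (c+1) + 2 * choose N (c+2) ≤ (2*(c+1)+4) * (2*(c+1)+3)^m
      have hgoal : Nat.choose N c + 3 * Nat.choose N (c+1) + 2 * Nat.choose N (c+1+1)
          ≤ (2*(c+1)+4) * (2*(c+1)+3)^(m+1) := by
        have hexp : (2*(c+1)+4) * (2*(c+1)+3)^(m+1)
            = (2*(c+1)+3) * ((2*(c+1)+4) * (2*(c+1)+3)^m) := by ring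
        rw [hexp]
        have hc1 : Nat.choose N c ≤ (c+1) * Nat.choose N (c+1) := le_trans (by omega) hkey
        calc Nat.choose N c + 3 * Nat.choose N (c+1) + 2 * Nat.choose N (c+1+1)
            ≤ (c+1) * Nat.choose N (c+1) + 3 * Nat.choose N (c+1) + 2 * Nat.choose N (c+1+1) := by
              omega
          _ ≤ (2*(c+1)+3) * (Nat.choose N (c+1) + 2 * Nat.choose N (c+1+1)) := by
              have : (c+1) + 3 ≤ 2*(c+1)+3 := by omega
              nlinarith [Nat.zero_le (Nat.choose N (c+1)), Nat.zero_le (Nat.choose N (c+1+1))]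
          _ ≤ (2*(c+1)+3) * ((2*(c+1)+4) * (2*(c+1)+3)^m) := by
              apply Nat.mul_le_mul_left
              exact ih'
      omega
  
lemma binom_sum_le (a' : ℕ) : ∀ m : ℕ,
    Nat.choose (a'+1+m) (a'+1) + 2 * Nat.choose (a'+1+m) (a'+2)
      ≤ 1 + (2*a'+4) * ∑ i ∈ Finset.range m, (2*a'+3)^i := by
  intro m
  induction m with
  | zero =>
    simp [Nat.choose_self, Nat.choose_eq_zero_of_lt]
  | succ m ih =>
    rw [Finset.sum_range_succ, Nat.mul_add]
    have e1 : a'+1+(m+1) = (a'+1+m)+1 := by omega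
    rw [e1, Nat.choose_succ_succ' _ a', Nat.choose_succ_succ' _ (a'+1)]
    have hG := binom_le_geom a' m
    have e2 : (a'+1+m).choose (a'+1+1) = (a'+1+m).choose (a'+2) := by norm_num
    omega

theorem aux (k : ℕ) (hk : 1 ≤ k) :
    ∀ n : ℕ, 1 ≤ n → ∀ b : ℕ, ∀ (X : SimpleGraph V),
      (∀ ⦃u : V⦄ (w : X.Walk u u), w.IsCycle → 2 * k ≤ w.length) →
      ∀ (S : Finset V), S.card ≤ b →
      (¬ ∃ f : V → Fin n, ∀ c : Fin n, NC X (S.filter (fun x => f x = c))) →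
      Nat.choose (n+k-1) (n-1) + 2 * Nat.choose (n+k-1) n ≤ S.card + 1 := by
  intro n
  induction n with
  | zero => intro h; exact absurd h (by omega)
  | succ n ihn =>
    intro _ b
    induction b with
    | zero =>
      intro X hgir S hS hbad
      exfalso
      apply hbad
      refine ⟨fun _ => 0, fun c u w hc => ⟨u, w.start_mem_support, ?_⟩⟩
      have hSe : S = ∅ := Finset.card_eq_zero.1 (le_antisymm hS (Nat.zero_le _))
      simp [hSe]
    | succ b ihb =>
      intro X hgir S hScard hbad
      rcases Nat.eq_zero_or_pos n with rfl | hn1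
      · -- one color: there must be a cycle inside S
        have h1 : ¬ ∀ c : Fin 1, NC X (S.filter fun x => (fun _ : V => (0 : Fin 1)) x = c) :=
          fun h => hbad ⟨_, h⟩
        have h2 : ¬ NC X S := by
          intro hnc
          apply h1
          intro c
          have hc0 : c = 0 := Subsingleton.elim c 0
          subst hc0
          have hfe : (S.filter fun _x : V => (0 : Fin 1) = 0) = S := by
            simp
          rw [hfe]
          exact hnc
        simp only [NC, not_forall] at h2
        push_neg at h2
        obtain ⟨u, w, hc, hall⟩ := h2
        have hlen := hgir w hc
        have hnodup : w.support.tail.Nodup := hc.support_nodup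
        have hcard : w.support.tail.length ≤ S.card := by
          rw [← List.toFinset_card_of_nodup hnodup]
          apply Finset.card_le_card
          intro x hx
          rw [List.mem_toFinset] at hx
          exact hall x (List.mem_of_mem_tail hx)
        have hlen2 : w.support.tail.length = w.length := by
          have hls := w.length_support
          rw [List.length_tail, hls]
          omega
        have he : 0+1+k-1 = k := by omega
        rw [he, Nat.choose_zero_right, Nat.choose_one_right]
        omega
      · by_cases ha : ∃ u ∈ S, (S.filter (fun y => X.Adj u y)).card ≤ 2*n+1
        · -- low-degree vertex: delete it
          obtain ⟨u₀, hu₀S, hdegu⟩ := ha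
          have hbad' : ¬ ∃ f : V → Fin (n+1), ∀ c : Fin (n+1),
              NC X ((S.erase u₀).filter fun x => f x = c) := by
            rintro ⟨f, hf⟩
            apply hbad
            have hpick : ∃ c : Fin (n+1),
                ((S.filter fun y => X.Adj u₀ y).filter fun y => f y = c).card ≤ 1 := by
              by_contra hno
              push_neg at hno
              have hsumeq : (S.filter fun y => X.Adj u₀ y).card
                  = ∑ c : Fin (n+1), ((S.filter fun y => X.Adj u₀ y).filter
                      fun y => f y = c).card :=
                Finset.card_eq_sum_card_fiberwise (fun x _ => Finset.mem_univ (f x))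
              have hsumge : 2 * (n+1) ≤ ∑ c : Fin (n+1),
                  ((S.filter fun y => X.Adj u₀ y).filter fun y => f y = c).card := by
                calc 2 * (n+1) = ∑ _c : Fin (n+1), 2 := by
                      rw [Finset.sum_const, smul_eq_mul, Finset.card_univ, Fintype.card_fin]
                      ring
                  _ ≤ _ := Finset.sum_le_sum (fun c _ => hno c)
              omega
            obtain ⟨c, hc1⟩ := hpick
            refine ⟨Function.update f u₀ c, fun c' u w hcyc => ?_⟩
            by_contra hex
            push_neg at hex
            by_cases hu : u₀ ∈ w.support
            · have hc' : c' = c := by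
                have h := hex u₀ hu
                rw [Finset.mem_filter, Function.update_self] at h
                exact h.2.symm
              have hc1' : ((S.filter fun y => X.Adj u₀ y).filter fun y => f y = c').card ≤ 1 := by
                rw [hc']
                exact hc1
              obtain ⟨a, b, hab, haadj, hbadj, hasup, hbsup⟩ := cycle_neighbors (hcyc.rotate hu)
              have haw := rotate_support_subset w hu a hasup
              have hbw := rotate_support_subset w hu b hbsup
              have haf := hex a haw
              have hbf := hex b hbw
              rw [Finset.mem_filter] at haf hbf
              have hane : a ≠ u₀ := haadj.ne'
              have hbne : b ≠ u₀ := hbadj.ne'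
              rw [Function.update_of_ne hane] at haf
              rw [Function.update_of_ne hbne] at hbf
              have hmem : ({a, b} : Finset V)
                  ⊆ (S.filter fun y => X.Adj u₀ y).filter fun y => f y = c' := by
                intro x hx
                rcases Finset.mem_insert.1 hx with rfl | hx'
                · rw [Finset.mem_filter, Finset.mem_filter]
                  exact ⟨⟨haf.1, haadj⟩, haf.2⟩
                · rw [Finset.mem_singleton] at hx'
                  subst hx'
                  rw [Finset.mem_filter, Finset.mem_filter]
                  exact ⟨⟨hbf.1, hbadj⟩, hbf.2⟩
              have h2le : 2 ≤ ((S.filter fun y => X.Adj u₀ y).filter fun y => f y = c').card := by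
                calc 2 = ({a, b} : Finset V).card := (Finset.card_pair hab).symm
                  _ ≤ _ := Finset.card_le_card hmem
              omega
            · obtain ⟨x, hxsup, hxnot⟩ := hf c' w hcyc
              apply hxnot
              have hxf := hex x hxsup
              rw [Finset.mem_filter] at hxf
              have hxne : x ≠ u₀ := fun h => hu (h ▸ hxsup)
              rw [Function.update_of_ne hxne] at hxf
              rw [Finset.mem_filter]
              exact ⟨Finset.mem_erase.2 ⟨hxne, hxf.1⟩, hxf.2⟩
          have hres := ihb X hgir (S.erase u₀)
            (by rw [Finset.card_erase_of_mem hu₀S]; omega) hbad'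
          rw [Finset.card_erase_of_mem hu₀S] at hres
          have hpos : 1 ≤ S.card := Finset.card_pos.2 ⟨u₀, hu₀S⟩
          omega
        · -- min degree ≥ 2n+2 inside S
          push_neg at ha
          have hSne : S.Nonempty := by
            rcases S.eq_empty_or_nonempty with rfl | h
            · exfalso
              apply hbad
              exact ⟨fun _ => 0, fun c u w hc => ⟨u, w.start_mem_support, by simp⟩⟩
            · exact h
          obtain ⟨v, hvS⟩ := hSne
          set G := Rg X S with hG
          have hgirG : ∀ ⦃u : V⦄ (w : G.Walk u u), w.IsCycle → 2*k ≤ w.length := rg_girth hgir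
          have hdegG : ∀ x, G.Reachable v x →
              2*n+2 ≤ (univ.filter fun y => G.Adj x y).card := by
            intro x hrx
            have hxS : x ∈ S := by
              obtain ⟨w⟩ := hrx
              exact rg_walk_mem w hvS
            have heq : univ.filter (fun y => G.Adj x y) = S.filter (fun y => X.Adj x y) := by
              ext y
              rw [Finset.mem_filter, Finset.mem_filter]
              constructor
              · rintro ⟨-, hadj, -, hyS⟩
                exact ⟨hyS, hadj⟩
              · rintro ⟨hyS, hadj⟩
                exact ⟨Finset.mem_univ _, hadj, hxS, hyS⟩
            rw [heq]
            have := ha x hxS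
            omega
          set B := univ.filter (fun x => G.Reachable v x ∧ G.dist v x < k) with hB
          have hBmoore := moore hk v hgirG hdegG
          have hBS : B ⊆ S := by
            intro x hx
            rw [hB, Finset.mem_filter] at hx
            obtain ⟨w⟩ := hx.2.1
            exact rg_walk_mem w hvS
          have hvB : v ∈ B := by
            rw [hB, Finset.mem_filter]
            refine ⟨Finset.mem_univ _, Reachable.refl v, ?_⟩
            rw [SimpleGraph.dist_self]
            omega
          have hBforest : NC X B := by
            intro u w hc
            by_contra hex
            push_neg at hex
            obtain ⟨w', hc', hsub⟩ := cycle_transfer w hc (fun x hx => hBS (hex x hx))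
            refine ball_acyclic (v := v) hgirG w' hc' (fun x hx => ?_)
            have hxB := hex x (hsub x hx)
            rw [hB, Finset.mem_filter] at hxB
            exact hxB.2
          obtain ⟨n', rfl⟩ : ∃ n', n = n' + 1 := ⟨n - 1, by omega⟩
          have hbad' : ¬ ∃ f : V → Fin (n'+1), ∀ c : Fin (n'+1),
              NC X ((S \ B).filter fun x => f x = c) := by
            rintro ⟨f, hf⟩
            apply hbad
            refine ⟨fun x => if x ∈ B then Fin.last (n'+1) else (f x).castSucc, fun c => ?_⟩
            rcases Fin.eq_castSucc_or_eq_last c with ⟨c₀, rfl⟩ | rfl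
            · have heq : (S.filter fun x =>
                  (if x ∈ B then Fin.last (n'+1) else (f x).castSucc) = c₀.castSucc)
                  = (S \ B).filter (fun x => f x = c₀) := by
                ext x
                simp only [Finset.mem_filter, Finset.mem_sdiff]
                constructor
                · rintro ⟨hxS, hxe⟩
                  by_cases hxB : x ∈ B
                  · rw [if_pos hxB] at hxe
                    exact absurd hxe.symm (Fin.castSucc_lt_last c₀).ne
                  · rw [if_neg hxB] at hxe
                    exact ⟨⟨hxS, hxB⟩, Fin.castSucc_injective _ hxe⟩
                · rintro ⟨⟨hxS, hxB⟩, hfx⟩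
                  refine ⟨hxS, ?_⟩
                  rw [if_neg hxB, hfx]
              rw [heq]
              exact hf c₀
            · have hsub : (S.filter fun x =>
                  (if x ∈ B then Fin.last (n'+1) else (f x).castSucc) = Fin.last (n'+1)) ⊆ B := by
                intro x hx
                rw [Finset.mem_filter] at hx
                by_contra hxB
                rw [if_neg hxB] at hx
                exact absurd hx.2 (Fin.castSucc_lt_last (f x)).ne
              exact NC.mono hsub hBforest
          have hrest := ihn (by omega) (S \ B).card X hgir (S \ B) le_rfl hbad'
          -- arithmetic assembly
          have hF := binom_sum_le n' (k-1)
          have e0 : 2*(n'+1)+2 = 2*n'+4 := by ring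
          have e0' : 2*(n'+1)+1 = 2*n'+3 := by ring
          rw [e0, e0'] at hBmoore
          have e1 : n'+1+(k-1) = n'+k := by omega
          rw [e1] at hF
          have hBcard : Nat.choose (n'+k) (n'+1) + 2 * Nat.choose (n'+k) (n'+2) ≤ B.card :=
            le_trans hF hBmoore
          have e2 : n'+1+k-1 = n'+k := by omega
          have e3 : n'+1-1 = n' := by omega
          rw [e2, e3] at hrest
          have e4 : n'+1+1+k-1 = n'+k+1 := by omega
          have e5 : n'+1+1-1 = n'+1 := by omega
          rw [e4, e5, Nat.choose_succ_succ' (n'+k) n', Nat.choose_succ_succ' (n'+k) (n'+1)]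
          have hsd : (S \ B).card = S.card - B.card := Finset.card_sdiff_of_subset hBS
          have e6 : (n'+k).choose (n'+1+1) = (n'+k).choose (n'+2) := by norm_num
          have hble : B.card ≤ S.card := Finset.card_le_card hBS
          omega

end DSG

/-- **Discrete systolic inequality for graphs (Theorem of Avvakumov–Balitskiy–Hubard–Karasev
applied to graphs).** If every cycle of a finite simple graph `X` has length at least `g`
(`g ≥ 3`) and the vertex set cannot be partitioned into `n` or fewer sets each inducing a
forest (`n ≥ 1`), then `|V(X)| ≥ C(n+⌊g/2⌋-1, n-1) + 2·C(n+⌊g/2⌋-1, n) - 1`. -/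
theorem discrete_systolic_graph {V : Type*} [Fintype V] (X : SimpleGraph V) (g n : ℕ)
    (hg : 3 ≤ g) (hn : 1 ≤ n)
    (hgirth : ∀ (v : V) (w : X.Walk v v), w.IsCycle → g ≤ w.length)
    (hess : ¬ ∃ f : V → Fin n, ∀ c : Fin n,
        ∀ (v : (f ⁻¹' {c})) (w : (X.induce (f ⁻¹' {c})).Walk v v), ¬ w.IsCycle) :
    (Fintype.card V : ℤ) ≥
      (Nat.choose (n + g / 2 - 1) (n - 1) : ℤ)
        + 2 * (Nat.choose (n + g / 2 - 1) n : ℤ) - 1 := by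
  classical
  set k := g / 2 with hkdef
  have hk : 1 ≤ k := by omega
  have hgir2 : ∀ ⦃u : V⦄ (w : X.Walk u u), w.IsCycle → 2 * k ≤ w.length := by
    intro u w hc
    have h1 := hgirth u w hc
    have h2 : 2 * (g / 2) ≤ g := by omega
    omega
  have hbad : ¬ ∃ f : V → Fin n, ∀ c : Fin n,
      DSG.NC X ((Finset.univ : Finset V).filter (fun x => f x = c)) := by
    rintro ⟨f, hf⟩
    apply hess
    refine ⟨f, fun c vv w hcyc => ?_⟩
    have hcyc2 : (w.map (SimpleGraph.Embedding.induce (G := X) (f ⁻¹' {c})).toHom).IsCycle :=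
      hcyc.map (SimpleGraph.Embedding.induce (G := X) (f ⁻¹' {c})).injective
    obtain ⟨x, hx, hxnot⟩ := hf c _ hcyc2
    apply hxnot
    rw [Finset.mem_filter]
    refine ⟨Finset.mem_univ _, ?_⟩
    rw [SimpleGraph.Walk.support_map] at hx
    obtain ⟨y, hy, rfl⟩ := List.mem_map.1 hx
    exact y.2
  have hmain := DSG.aux k hk n hn (Fintype.card V) X hgir2 Finset.univ
    (by rw [Finset.card_univ]) hbad
  rw [Finset.card_univ] at hmain
  rw [ge_iff_le]
  rw [hkdef] at hmain
  have hcast : ((Nat.choose (n + g / 2 - 1) (n - 1) : ℕ) : ℤ)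
      + 2 * ((Nat.choose (n + g / 2 - 1) n : ℕ) : ℤ) ≤ (Fintype.card V : ℤ) + 1 := by
    exact_mod_cast hmain
  linarith
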